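/- For every integer d ≥ 2 there exist a real ε > 0 and n₀ ∈ ℕ such that the following holds: if G is a distance graph in ℝ^d on n ≥ n₀ vertices, then the number of (⌊d/2⌋+1)-cliques of G is at most n^{⌊d/2⌋+1−ε}. -/

import Mathlib

open Finset

lemma ortho_aux {E : Type*} [NormedAddCommGroup E] [InnerProductSpace ℝ E]
    {p q r s : E} (h1 : dist p r = dist p s) (h2 : dist q r = dist q s) :
    (inner ℝ (p - q) (r - s) : ℝ) = 0 := by
  have e1 : ‖p - r‖^2 = ‖p - s‖^2 := by rw [← dist_eq_norm, ← dist_eq_norm, h1]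
  have e2 : ‖q - r‖^2 = ‖q - s‖^2 := by rw [← dist_eq_norm, ← dist_eq_norm, h2]
  rw [norm_sub_sq_real, norm_sub_sq_real] at e1 e2
  rw [inner_sub_left, inner_sub_right, inner_sub_right]
  linarith

lemma noncol_aux {E : Type*} [NormedAddCommGroup E] [InnerProductSpace ℝ E]
    {a b c p : E} (hab : a ≠ b)
    (h0 : dist p a = 1) (h1 : dist p b = 1) (h2 : dist p c = 1)
    {t : ℝ} (ht : c - a = t • (b - a)) : t = 0 ∨ t = 1 := by
  have hu : b - a ≠ 0 := sub_ne_zero.mpr (Ne.symm hab)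
  have hu2 : 0 < ‖b - a‖^2 := by have := norm_pos_iff.mpr hu; positivity
  have e0 : ‖p - a‖^2 = 1 := by rw [← dist_eq_norm, h0]; norm_num
  have e1 : ‖(p - a) - (b - a)‖^2 = 1 := by
    rw [show (p - a) - (b - a) = p - b by abel, ← dist_eq_norm, h1]; norm_num
  have e2 : ‖(p - a) - t • (b - a)‖^2 = 1 := by
    rw [← ht, show (p - a) - (c - a) = p - c by abel, ← dist_eq_norm, h2]; norm_num
  rw [norm_sub_sq_real] at e1 e2
  rw [real_inner_smul_right, norm_smul] at e2
  have : (t^2 - t) * ‖b - a‖^2 = 0 := by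
    have hns : ‖t • (b-a)‖ = ‖t‖ * ‖b-a‖ := norm_smul t (b-a)
    have : (‖t‖ * ‖b - a‖)^2 = t^2 * ‖b-a‖^2 := by
      rw [mul_pow, Real.norm_eq_abs, sq_abs]
    nlinarith [e0, e1, e2]
  have h3 : t^2 - t = 0 := by
    rcases mul_eq_zero.mp this with h | h
    · exact h
    · exact absurd h (ne_of_gt hu2)
  have : t * (t - 1) = 0 := by ring_nf; ring_nf at h3; linarith
  rcases mul_eq_zero.mp this with h | h
  · exact Or.inl h
  · exact Or.inr (by linarith)

lemma geom_main {d : ℕ} (hd : 2 ≤ d)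
    (x : Fin (d/2+1) → Fin 3 → EuclideanSpace ℝ (Fin d))
    (hinj : ∀ i, Function.Injective (x i))
    (hdist : ∀ i j, i ≠ j → ∀ a b, dist (x i a) (x j b) = 1) : False := by
  have hk2 : 2 ≤ d/2+1 := by omega
  set u : Fin (d/2+1) → EuclideanSpace ℝ (Fin d) := fun i => x i 1 - x i 0 with hu
  set v : Fin (d/2+1) → EuclideanSpace ℝ (Fin d) := fun i => x i 2 - x i 0 with hv
  -- cross orthogonality
  have horth : ∀ i j, i ≠ j → ∀ a a' b b',
      (inner ℝ (x i a - x i a') (x j b - x j b') : ℝ) = 0 := by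
    intro i j hij a a' b b'
    exact ortho_aux (by rw [hdist i j hij a b, hdist i j hij a b'])
      (by rw [hdist i j hij a' b, hdist i j hij a' b'])
  -- no collinearity: v i is not a multiple of u i
  have hvu : ∀ i (t : ℝ), v i ≠ t • u i := by
    intro i t hti
    obtain ⟨j, hj⟩ : ∃ j : Fin (d/2+1), j ≠ i := by
      rcases eq_or_ne i ⟨0, by omega⟩ with h | h
      · exact ⟨⟨1, by omega⟩, by rw [h]; simp [Fin.ext_iff]⟩
      · exact ⟨⟨0, by omega⟩, fun hc => h (hc ▸ rfl)⟩
    have hab : x i 0 ≠ x i 1 := fun h => by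
      have := hinj i h; simp at this
    have := noncol_aux hab (hdist j i hj 0 0) (hdist j i hj 0 1)
      (hdist j i hj 0 2) (t := t) hti
    rcases this with h | h
    · subst h
      simp only [zero_smul, hv] at hti
      have : x i 2 = x i 0 := by
        have := sub_eq_zero.mp hti; exact this
      have := hinj i this; simp at this
    · subst h
      simp only [one_smul, hv, hu] at hti
      have : x i 2 = x i 1 := by
        have h' : x i 2 - x i 1 = 0 := by
          have := hti; rw [sub_eq_sub_iff_sub_eq_sub] at this; simpa using this
        exact sub_eq_zero.mp h'
      have := hinj i this; simp at this
  -- pair independence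
  have hpair : ∀ i (a b : ℝ), a • u i + b • v i = 0 → a = 0 ∧ b = 0 := by
    intro i a b hab
    have hune : u i ≠ 0 := by
      intro h
      have : x i 1 = x i 0 := sub_eq_zero.mp h
      have := hinj i this; simp at this
    rcases eq_or_ne b 0 with hb | hb
    · subst hb
      simp only [zero_smul, add_zero] at hab
      rcases smul_eq_zero.mp hab with h | h
      · exact ⟨h, rfl⟩
      · exact absurd h hune
    · exfalso
      apply hvu i (-(a/b))
      have : b • v i = -(a • u i) := by
        rw [eq_neg_iff_add_eq_zero]; linear_combination (norm := abel) hab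
      have hb' : v i = b⁻¹ • -(a • u i) := by
        rw [← this, inv_smul_smul₀ hb]
      rw [hb']
      rw [smul_neg, smul_smul, neg_smul]
      ring_nf
  -- the 2k vectors
  set y : Fin (d/2+1) × Fin 2 → EuclideanSpace ℝ (Fin d) := fun p => if p.2 = 0 then u p.1 else v p.1 with hy
  have hli : LinearIndependent ℝ y := by
    rw [Fintype.linearIndependent_iff]
    intro g hg
    set z : Fin (d/2+1) → EuclideanSpace ℝ (Fin d) := fun i => g (i,0) • u i + g (i,1) • v i with hz
    have hzsum : ∑ i, z i = 0 := by
      rw [← hg, Fintype.sum_prod_type]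
      apply Finset.sum_congr rfl
      intro i _
      rw [Fin.sum_univ_two]
      simp [hz, hy]
    have hzorth : ∀ i j, i ≠ j → (inner ℝ (z i) (z j) : ℝ) = 0 := by
      intro i j hij
      simp only [hz, inner_add_left, inner_add_right, real_inner_smul_left,
        real_inner_smul_right, hu, hv]
      rw [horth i j hij 1 0 1 0, horth i j hij 1 0 2 0,
        horth i j hij 2 0 1 0, horth i j hij 2 0 2 0]
      ring
    have hnz : ∑ i, (inner ℝ (z i) (z i) : ℝ) = 0 := by
      have h1 : ∀ i : Fin (d/2+1), (inner ℝ (z i) (z i) : ℝ) = ∑ j, (inner ℝ (z i) (z j) : ℝ) := by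
        intro i
        rw [Finset.sum_eq_single i (fun j _ hj => hzorth i j (Ne.symm hj)) (by simp)]
      calc ∑ i, (inner ℝ (z i) (z i) : ℝ) = ∑ i, ∑ j, (inner ℝ (z i) (z j) : ℝ) :=
            Finset.sum_congr rfl (fun i _ => h1 i)
        _ = (inner ℝ (∑ i, z i) (∑ j, z j) : ℝ) := by rw [sum_inner]; simp [inner_sum]
        _ = 0 := by rw [hzsum]; simp
    have hzero : ∀ i, z i = 0 := by
      intro i
      have := (Finset.sum_eq_zero_iff_of_nonneg
        (fun j _ => real_inner_self_nonneg)).mp hnz i (Finset.mem_univ i)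
      exact inner_self_eq_zero.mp this
    intro p
    obtain ⟨i, a⟩ := p
    have := hpair i (g (i,0)) (g (i,1)) (hzero i)
    fin_cases a
    · exact this.1
    · exact this.2
  have hcard := hli.fintype_card_le_finrank
  rw [finrank_euclideanSpace_fin] at hcard
  simp [Fintype.card_prod] at hcard
  omega

-- Lemma A: summing a function of one coordinate over a function space
lemma sum_eval {I W : Type*} [Fintype I] [DecidableEq I] [Fintype W]
    (i₀ : I) (G : W → ℝ) :
    ∑ x : I → W, G (x i₀) =
      (Fintype.card W : ℝ)^(Fintype.card I - 1) * ∑ w : W, G w := by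
  classical
  have h1 : ∀ x : I → W, G (x i₀) = ∏ i, (if i = i₀ then G (x i) else 1) := by
    intro x
    rw [Finset.prod_ite_eq' Finset.univ i₀ (fun i => G (x i))]
    simp
  simp_rw [h1]
  rw [← Fintype.piFinset_univ,
    ← Finset.prod_univ_sum (fun _ : I => (Finset.univ : Finset W))
      (fun i w => if i = i₀ then G w else 1)]
  have h2 : ∀ i : I, (∑ w : W, if i = i₀ then G w else 1)
      = if i = i₀ then ∑ w : W, G w else (Fintype.card W : ℝ) := by
    intro i; split <;> simp [Finset.card_univ]
  simp_rw [h2]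
  rw [← Finset.mul_prod_erase Finset.univ _ (Finset.mem_univ i₀)]
  rw [if_pos rfl]
  rw [Finset.prod_congr rfl (fun i hi => if_neg (Finset.mem_erase.mp hi).1)]
  rw [Finset.prod_const, Finset.card_erase_of_mem (Finset.mem_univ i₀), Finset.card_univ]
  ring

open Classical in
noncomputable def indR (p : Prop) : ℝ := if p then 1 else 0

lemma indR_nonneg (p : Prop) : 0 ≤ indR p := by
  unfold indR; split_ifs <;> norm_num

lemma indR_le_one (p : Prop) : indR p ≤ 1 := by
  unfold indR; split_ifs <;> norm_num

lemma indR_pos {p : Prop} (h : p) : indR p = 1 := by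
  unfold indR; rw [if_pos h]

lemma indR_neg {p : Prop} (h : ¬ p) : indR p = 0 := by
  unfold indR; rw [if_neg h]

lemma indR_sum {α : Type*} [Fintype α] (p : α → Prop) [DecidablePred p] :
    ∑ x : α, indR (p x) = ((Finset.univ.filter p).card : ℝ) := by
  rw [← Finset.sum_boole]
  apply Finset.sum_congr rfl
  intro x _
  by_cases h : p x
  · rw [indR_pos h, if_pos h]
  · rw [indR_neg h, if_neg h]


def sel {V : Type*} {k : ℕ} (x : Fin k → Fin 3 → V) (s : Fin k → Fin 3) : Fin k → V :=
  fun i => x i (s i)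

def SS (k j : ℕ) : Finset (Fin k → Fin 3) :=
  Finset.univ.filter (fun s => ∀ i : Fin k, j ≤ i.val → s i = 0)

noncomputable def MM {V : Type*} [Fintype V] {k : ℕ} (f : (Fin k → V) → ℝ) (j : ℕ) : ℝ :=
  ∑ x : Fin k → Fin 3 → V, ∏ s ∈ SS k j, f (sel x s)

lemma MM_nonneg {V : Type*} [Fintype V] {k : ℕ} (f : (Fin k → V) → ℝ)
    (hf : ∀ y, 0 ≤ f y) (j : ℕ) : 0 ≤ MM f j :=
  Finset.sum_nonneg fun x _ => Finset.prod_nonneg fun s _ => hf _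

lemma MM_step {V : Type*} [Fintype V] {k : ℕ} (f : (Fin k → V) → ℝ)
    (hf : ∀ y, 0 ≤ f y) {j : ℕ} (hj : j < k) :
    MM f j ^ 3 ≤ ((Fintype.card V : ℝ))^(6*k) * MM f (j+1) := by
  classical
  set n := Fintype.card V with hn
  set jj : Fin k := ⟨j, hj⟩ with hjj
  have hjv : (jj : ℕ) = j := rfl
  set E := Equiv.piSplitAt jj (fun _ : Fin k => (Fin 3 → V)) with hE
  set X : ({i : Fin k // i ≠ jj} → Fin 3 → V) → V → (Fin k → Fin 3 → V) :=
    fun r w => E.symm (fun _ => w, r) with hX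
  set H : ({i : Fin k // i ≠ jj} → Fin 3 → V) → V → ℝ :=
    fun r w => ∏ s ∈ SS k j, f (sel (X r w) s) with hH
  have hXval : ∀ r w (i : Fin k), X r w i = if h : i = jj then (fun _ => w) else r ⟨i, h⟩ := by
    intro r w i
    simp only [hX, hE, Equiv.piSplitAt_symm_apply]
    rcases eq_or_ne i jj with h | h
    · subst h; simp
    · simp [h]
  have hXE : ∀ (x : Fin k → Fin 3 → V) w (i : Fin k) (hi : i ≠ jj),
      X (E x).2 w i = x i := by
    intro x w i hi
    rw [hXval, dif_neg hi]
    rfl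
  have hXjj : ∀ r w, X r w jj = fun _ => w := by
    intro r w; rw [hXval, dif_pos rfl]
  -- MM f j rewriting
  have hMMj : MM f j = ∑ x : Fin k → Fin 3 → V, H (E x).2 (x jj 0) := by
    unfold MM
    apply Finset.sum_congr rfl
    intro x _
    rw [hH]
    apply Finset.prod_congr rfl
    intro s hs
    congr 1
    funext i
    rcases eq_or_ne i jj with h | h
    · rw [h]
      have hs0 : s jj = 0 := by
        simp only [SS, Finset.mem_filter] at hs
        exact hs.2 jj (le_of_eq hjv.symm)
      simp [sel, hXjj, hs0]
    · simp [sel, hXE x _ i h]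
  -- MM f (j+1) rewriting
  have hMMj1 : MM f (j+1) = ∑ x : Fin k → Fin 3 → V, ∏ a : Fin 3, H (E x).2 (x jj a) := by
    unfold MM
    apply Finset.sum_congr rfl
    intro x _
    have hb : ∏ s ∈ SS k (j+1), f (sel x s)
        = ∏ p ∈ (SS k j) ×ˢ (Finset.univ : Finset (Fin 3)),
            f (sel x (Function.update p.1 jj p.2)) := by
      apply Finset.prod_nbij' (fun s => (Function.update s jj 0, s jj))
        (fun p => Function.update p.1 jj p.2)
      · intro s hs
        simp only [SS, Finset.mem_filter, Finset.mem_product] at hs ⊢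
        refine ⟨⟨Finset.mem_univ _, ?_⟩, Finset.mem_univ _⟩
        intro i hi
        rcases eq_or_ne i jj with h | h
        · rw [h]; simp
        · rw [Function.update_of_ne h]
          exact hs.2 i (by omega)
      · intro p hp
        simp only [SS, Finset.mem_filter, Finset.mem_product] at hp ⊢
        refine ⟨Finset.mem_univ _, ?_⟩
        intro i hi
        have hne : i ≠ jj := by
          intro h
          have : (i : ℕ) = j := by rw [h]
          omega
        rw [Function.update_of_ne hne]
        exact hp.1.2 i (by omega)
      · intro s hs
        rw [Function.update_idem, Function.update_eq_self]
      · intro p hp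
        simp only [SS, Finset.mem_filter, Finset.mem_product] at hp
        have h2 : Function.update (Function.update p.1 jj p.2) jj 0 = p.1 := by
          rw [Function.update_idem]
          have : p.1 jj = 0 := hp.1.2 jj (le_of_eq hjv.symm)
          rw [← this, Function.update_eq_self]
        simp only [Function.update_self, h2]
      · intro s hs
        have hupd : Function.update (Function.update s jj 0) jj (s jj) = s := by
          rw [Function.update_idem, Function.update_eq_self]
        simp only [hupd]
    rw [hb, Finset.prod_product, Finset.prod_comm]
    apply Finset.prod_congr rfl
    intro a _
    rw [hH]
    apply Finset.prod_congr rfl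
    intro s _
    congr 1
    funext i
    rcases eq_or_ne i jj with h | h
    · rw [h]; simp [sel, hXjj, Function.update_self]
    · simp [sel, hXE x _ i h, Function.update_of_ne h]
  -- reindex by E
  have hre1 : ∑ x : Fin k → Fin 3 → V, H (E x).2 (x jj 0)
      = ∑ p : (Fin 3 → V) × ({i : Fin k // i ≠ jj} → Fin 3 → V), H p.2 (p.1 0) :=
    Equiv.sum_comp E (fun p => H p.2 (p.1 0))
  have hre2 : ∑ x : Fin k → Fin 3 → V, ∏ a : Fin 3, H (E x).2 (x jj a)
      = ∑ p : (Fin 3 → V) × ({i : Fin k // i ≠ jj} → Fin 3 → V), ∏ a : Fin 3, H p.2 (p.1 a) :=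
    Equiv.sum_comp E (fun p => ∏ a : Fin 3, H p.2 (p.1 a))
  set T : ({i : Fin k // i ≠ jj} → Fin 3 → V) → ℝ := fun r => ∑ w : V, H r w with hT
  have hTnn : ∀ r, 0 ≤ T r := by
    intro r
    exact Finset.sum_nonneg fun w _ => Finset.prod_nonneg fun s _ => hf _
  have hMMj' : MM f j = (n:ℝ)^2 * ∑ r, T r := by
    rw [hMMj, hre1, Fintype.sum_prod_type, Finset.sum_comm, Finset.mul_sum]
    apply Finset.sum_congr rfl
    intro r _
    rw [hT]
    have h := sum_eval (I := Fin 3) (W := V) 0 (H r)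
    simpa [hn] using h
  have hMMj1' : MM f (j+1) = ∑ r, (T r)^3 := by
    rw [hMMj1, hre2, Fintype.sum_prod_type, Finset.sum_comm]
    apply Finset.sum_congr rfl
    intro r _
    have h : ∑ c : Fin 3 → V, ∏ a : Fin 3, H r (c a) = ∏ a : Fin 3, ∑ w : V, H r w := by
      rw [← Fintype.piFinset_univ,
        ← Finset.prod_univ_sum (fun _ : Fin 3 => (Finset.univ : Finset V))
          (fun _ w => H r w)]
    calc ∑ c : Fin 3 → V, ∏ a : Fin 3, H r (c a) = (∑ w : V, H r w)^3 := by
          rw [h, Finset.prod_const, Finset.card_univ, Fintype.card_fin]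
      _ = T r ^ 3 := by rw [hT]
  -- Jensen
  have hJ : (∑ r, T r)^3 ≤ ((Fintype.card ({i : Fin k // i ≠ jj} → Fin 3 → V) : ℝ))^2
      * ∑ r, (T r)^3 := by
    have h := pow_sum_le_card_mul_sum_pow (s := Finset.univ)
      (f := T) (fun r _ => hTnn r) 2
    simpa [Finset.card_univ] using h
  have hcard : (Fintype.card ({i : Fin k // i ≠ jj} → Fin 3 → V) : ℝ) = ((n:ℝ)^3)^(k-1) := by
    have h1 : Fintype.card {i : Fin k // i ≠ jj} = k - 1 := by
      simp [Fintype.card_subtype_compl]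
    rw [Fintype.card_fun, Fintype.card_fun, h1, Fintype.card_fin, hn]
    push_cast
    ring
  calc MM f j ^ 3 = ((n:ℝ)^2)^3 * (∑ r, T r)^3 := by rw [hMMj']; ring
    _ ≤ ((n:ℝ)^2)^3 * ((((n:ℝ)^3)^(k-1))^2 * ∑ r, (T r)^3) := by
        apply mul_le_mul_of_nonneg_left _ (by positivity)
        rw [← hcard]; exact hJ
    _ = (n:ℝ)^(2*3) * ((n:ℝ)^(3*((k-1)*2)) * ∑ r, (T r)^3) := by
        rw [← pow_mul, ← pow_mul, ← pow_mul]
    _ = (n:ℝ)^(2*3 + 3*((k-1)*2)) * ∑ r, (T r)^3 := by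
        rw [← mul_assoc, ← pow_add]
    _ = (n:ℝ)^(6*k) * MM f (j+1) := by
        rw [hMMj1']
        congr 2
        omega

lemma MM_zero {V : Type*} [Fintype V] {k : ℕ} (f : (Fin k → V) → ℝ) :
    MM f 0 = ((Fintype.card V : ℝ))^(2*k) * ∑ y : Fin k → V, f y := by
  classical
  have hS0 : SS k 0 = {fun _ => 0} := by
    ext s
    simp only [SS, Finset.mem_filter, Finset.mem_singleton, Finset.mem_univ, true_and]
    constructor
    · intro h; funext i; exact h i (Nat.zero_le _)
    · intro h i _; rw [h]
  unfold MM
  rw [hS0]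
  simp only [Finset.prod_singleton]
  have hsel : ∀ x : Fin k → Fin 3 → V, sel x (fun _ => 0) = fun i => x i 0 := fun x => rfl
  simp_rw [hsel]
  -- reindex by piComm
  have hswap : ∑ x : Fin k → Fin 3 → V, f (fun i => x i 0)
      = ∑ x' : Fin 3 → Fin k → V, f (x' 0) := by
    exact (Equiv.sum_comp (Equiv.piComm (fun (_ : Fin 3) (_ : Fin k) => V))
      (fun x => f (fun i => x i 0))).symm
  rw [hswap, sum_eval (I := Fin 3) (W := Fin k → V) 0 f]
  simp [Fintype.card_fun, ← pow_mul, mul_comm]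

lemma MM_chain {V : Type*} [Fintype V] {k : ℕ} (f : (Fin k → V) → ℝ)
    (hf : ∀ y, 0 ≤ f y) : ∀ j ≤ k,
    (MM f 0)^(3^j) ≤ ((Fintype.card V : ℝ))^(3*k*(3^j - 1)) * MM f j := by
  intro j
  induction j with
  | zero => intro _; simp
  | succ j ih =>
    intro hjk
    have hj : j < k := by omega
    have h1 := ih (le_of_lt hj)
    have h31 : 1 ≤ 3^j := Nat.one_le_pow _ _ (by norm_num)
    calc (MM f 0)^(3^(j+1)) = ((MM f 0)^(3^j))^3 := by
          rw [← pow_mul, pow_succ]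
      _ ≤ (((Fintype.card V : ℝ))^(3*k*(3^j - 1)) * MM f j)^3 := by
          exact pow_le_pow_left₀ (pow_nonneg (MM_nonneg f hf 0) _) h1 3
      _ = ((Fintype.card V : ℝ))^(3*k*(3^j - 1)*3) * (MM f j)^3 := by
          rw [mul_pow, ← pow_mul]
      _ ≤ ((Fintype.card V : ℝ))^(3*k*(3^j - 1)*3) *
            (((Fintype.card V : ℝ))^(6*k) * MM f (j+1)) := by
          apply mul_le_mul_of_nonneg_left (MM_step f hf hj) (by positivity)
      _ = ((Fintype.card V : ℝ))^(3*k*(3^j - 1)*3 + 6*k) * MM f (j+1) := by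
          rw [← mul_assoc, ← pow_add]
      _ = ((Fintype.card V : ℝ))^(3*k*(3^(j+1) - 1)) * MM f (j+1) := by
          congr 2
          have h31' : 1 ≤ 3^(j+1) := Nat.one_le_pow _ _ (by norm_num)
          zify [h31, h31']
          rw [pow_succ]
          ring

lemma inj3 {W : Type*} {c : Fin 3 → W} (h01 : c 0 ≠ c 1) (h02 : c 0 ≠ c 2)
    (h12 : c 1 ≠ c 2) : Function.Injective c := by
  intro a b hab
  fin_cases a <;> fin_cases b <;>
    first
      | rfl
      | exact absurd hab h01 | exact absurd hab h02 | exact absurd hab h12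
      | exact absurd hab.symm h01 | exact absurd hab.symm h02 | exact absurd hab.symm h12

lemma tricho3 : ∀ (a b g i : Fin 3), a ≠ b → a ≠ g → b ≠ g → (i = a ∨ i = b ∨ i = g) := by
  decide

lemma noninj_card {V : Type*} [Fintype V] :
    ∑ c : Fin 3 → V, indR (¬ Function.Injective c)
      ≤ 3*((Fintype.card V:ℝ)^2) := by
  classical
  rw [indR_sum (fun c : Fin 3 → V => ¬ Function.Injective c)]
  have hcard1 : ∀ (a b g : Fin 3), a ≠ b → a ≠ g → b ≠ g →
      (Finset.univ.filter (fun c : Fin 3 → V => c a = c b)).card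
        ≤ Fintype.card V ^ 2 := by
    intro a b g hab hag hbg
    have hinj : Set.InjOn (fun c : Fin 3 → V => (c a, c g))
        ↑(Finset.univ.filter (fun c : Fin 3 → V => c a = c b)) := by
      intro c hc c' hc' hcc
      simp only [Finset.coe_filter, Set.mem_setOf_eq, Finset.mem_univ, true_and] at hc hc'
      simp only [Prod.mk.injEq] at hcc
      funext i
      rcases tricho3 a b g i hab hag hbg with h | h | h
      · rw [h]; exact hcc.1
      · rw [h, ← hc, ← hc']; exact hcc.1
      · rw [h]; exact hcc.2
    have h := Finset.card_le_card_of_injOn (fun c : Fin 3 → V => (c a, c g))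
      (fun c _ => Finset.mem_univ _) hinj
    calc (Finset.univ.filter (fun c : Fin 3 → V => c a = c b)).card
        ≤ (Finset.univ : Finset (V × V)).card := h
      _ = Fintype.card V ^ 2 := by
          rw [Finset.card_univ, Fintype.card_prod]; ring
  have hsub : Finset.univ.filter (fun c : Fin 3 → V => ¬ Function.Injective c)
      ⊆ (Finset.univ.filter (fun c : Fin 3 → V => c 0 = c 1))
        ∪ (Finset.univ.filter (fun c : Fin 3 → V => c 0 = c 2))
        ∪ (Finset.univ.filter (fun c : Fin 3 → V => c 1 = c 2)) := by
    intro c hc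
    simp only [Finset.mem_filter, Finset.mem_univ, true_and] at hc
    simp only [Finset.mem_union, Finset.mem_filter, Finset.mem_univ, true_and]
    by_contra hcon
    push_neg at hcon
    exact hc (inj3 hcon.1.1 hcon.1.2 hcon.2)
  have hc1 := hcard1 0 1 2 (by decide) (by decide) (by decide)
  have hc2 := hcard1 0 2 1 (by decide) (by decide) (by decide)
  have hc3 := hcard1 1 2 0 (by decide) (by decide) (by decide)
  have hcu := Finset.card_le_card hsub
  have hcu2 := Finset.card_union_le
    ((Finset.univ.filter (fun c : Fin 3 → V => c 0 = c 1))
      ∪ (Finset.univ.filter (fun c : Fin 3 → V => c 0 = c 2)))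
    (Finset.univ.filter (fun c : Fin 3 → V => c 1 = c 2))
  have hcu3 := Finset.card_union_le
    (Finset.univ.filter (fun c : Fin 3 → V => c 0 = c 1))
    (Finset.univ.filter (fun c : Fin 3 → V => c 0 = c 2))
  have : (Finset.univ.filter (fun c : Fin 3 → V => ¬ Function.Injective c)).card
      ≤ 3 * Fintype.card V ^ 2 := by
    have step1 := Finset.card_le_card hsub
    have step2 := le_trans step1 hcu2
    have step3 := le_trans step2 (Nat.add_le_add_right hcu3 _)
    have step4 := le_trans step3 (Nat.add_le_add (Nat.add_le_add hc1 hc2) hc3)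
    calc (Finset.univ.filter (fun c : Fin 3 → V => ¬ Function.Injective c)).card
        ≤ Fintype.card V ^ 2 + Fintype.card V ^ 2 + Fintype.card V ^ 2 := step4
      _ = 3 * Fintype.card V ^ 2 := by ring
  calc ((Finset.univ.filter (fun c : Fin 3 → V => ¬ Function.Injective c)).card : ℝ)
      ≤ ((3 * Fintype.card V ^ 2 : ℕ) : ℝ) := by exact_mod_cast this
    _ = 3*((Fintype.card V:ℝ)^2) := by push_cast; ring

lemma MM_top {V : Type*} [Fintype V] {k : ℕ} (hk : 1 ≤ k) (f : (Fin k → V) → ℝ)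
    (hf0 : ∀ y, 0 ≤ f y) (hf1 : ∀ y, f y ≤ 1)
    (hzero : ∀ x : Fin k → Fin 3 → V, (∀ i, Function.Injective (x i)) →
      ∃ s : Fin k → Fin 3, f (fun i => x i (s i)) = 0) :
    MM f k ≤ 3*k*((Fintype.card V : ℝ))^(3*k - 1) := by
  classical
  have hSk : SS k k = Finset.univ := by
    apply Finset.filter_true_of_mem
    intro s _ i hi
    exact absurd hi (by omega)
  unfold MM
  rw [hSk]
  have hterm : ∀ x : Fin k → Fin 3 → V,
      ∏ s : Fin k → Fin 3, f (sel x s)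
        ≤ ∑ i : Fin k, indR (¬ Function.Injective (x i)) := by
    intro x
    by_cases hx : ∀ i, Function.Injective (x i)
    · obtain ⟨s, hs⟩ := hzero x hx
      have : ∏ s : Fin k → Fin 3, f (sel x s) = 0 :=
        Finset.prod_eq_zero (Finset.mem_univ s) hs
      rw [this]
      exact Finset.sum_nonneg fun i _ => indR_nonneg _
    · push_neg at hx
      obtain ⟨i, hi⟩ := hx
      have h1 : ∏ s : Fin k → Fin 3, f (sel x s) ≤ 1 :=
        Finset.prod_le_one (fun s _ => hf0 _) (fun s _ => hf1 _)
      have h2 : (1:ℝ) ≤ ∑ i : Fin k, indR (¬ Function.Injective (x i)) :=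
        calc (1:ℝ) = indR (¬ Function.Injective (x i)) := (indR_pos hi).symm
          _ ≤ ∑ i : Fin k, indR (¬ Function.Injective (x i)) :=
            Finset.single_le_sum (f := fun j : Fin k => indR (¬ Function.Injective (x j)))
              (fun j _ => indR_nonneg _) (Finset.mem_univ i)
      linarith
  calc ∑ x : Fin k → Fin 3 → V, ∏ s : Fin k → Fin 3, f (sel x s)
      ≤ ∑ x : Fin k → Fin 3 → V, ∑ i : Fin k,
          indR (¬ Function.Injective (x i)) :=
        Finset.sum_le_sum fun x _ => hterm x
    _ = ∑ i : Fin k, ∑ x : Fin k → Fin 3 → V,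
          indR (¬ Function.Injective (x i)) := Finset.sum_comm
    _ ≤ ∑ _i : Fin k, 3*((Fintype.card V:ℝ)^2) * ((Fintype.card V:ℝ)^3)^(k-1) := by
        apply Finset.sum_le_sum
        intro i _
        rw [sum_eval (I := Fin k) (W := Fin 3 → V) i
          (fun c => indR (¬ Function.Injective c))]
        have hcw : ((Fintype.card (Fin 3 → V) : ℕ) : ℝ) = ((Fintype.card V:ℝ))^3 := by
          rw [Fintype.card_fun, Fintype.card_fin]; push_cast; ring
        rw [hcw, Fintype.card_fin]
        calc ((Fintype.card V:ℝ)^3)^(k-1)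
              * ∑ c : Fin 3 → V, indR (¬ Function.Injective c)
            ≤ ((Fintype.card V:ℝ)^3)^(k-1) * (3*((Fintype.card V:ℝ)^2)) :=
              mul_le_mul_of_nonneg_left noninj_card (by positivity)
          _ = 3*((Fintype.card V:ℝ)^2) * ((Fintype.card V:ℝ)^3)^(k-1) := by ring
    _ = 3*k*((Fintype.card V : ℝ))^(3*k - 1) := by
        rw [Finset.sum_const, Finset.card_univ, Fintype.card_fin, nsmul_eq_mul]
        have hpow : ((Fintype.card V:ℝ)^2) * (((Fintype.card V:ℝ))^3)^(k-1)
            = ((Fintype.card V:ℝ))^(3*k-1) := by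
          rw [← pow_mul, ← pow_add]
          congr 1
          omega
        calc (k:ℝ) * (3*((Fintype.card V:ℝ)^2) * (((Fintype.card V:ℝ))^3)^(k-1))
            = 3*(k:ℝ) * (((Fintype.card V:ℝ)^2) * (((Fintype.card V:ℝ))^3)^(k-1)) := by ring
          _ = 3*k*((Fintype.card V : ℝ))^(3*k - 1) := by rw [hpow]

lemma count_main {V : Type*} [Fintype V] {k : ℕ} (hk : 1 ≤ k) (hn : 0 < Fintype.card V)
    (f : (Fin k → V) → ℝ) (hf0 : ∀ y, 0 ≤ f y) (hf1 : ∀ y, f y ≤ 1)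
    (hzero : ∀ x : Fin k → Fin 3 → V, (∀ i, Function.Injective (x i)) →
      ∃ s : Fin k → Fin 3, f (fun i => x i (s i)) = 0) :
    (∑ y : Fin k → V, f y)^(3^k)
      ≤ 3*k*((Fintype.card V : ℝ))^(k*3^k - 1) := by
  have hn' : (0:ℝ) < (Fintype.card V : ℝ) := by exact_mod_cast hn
  set n : ℝ := (Fintype.card V : ℝ) with hndef
  have hchain := MM_chain f hf0 k le_rfl
  have htop := MM_top hk f hf0 hf1 hzero
  have h0 := MM_zero f
  set m : ℝ := ∑ y : Fin k → V, f y with hm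
  have hm0 : 0 ≤ m := Finset.sum_nonneg fun y _ => hf0 y
  have e1 : 1 ≤ 3^k := Nat.one_le_pow _ _ (by norm_num)
  have e2 : 1 ≤ 3*k := by omega
  have e3 : 1 ≤ k*3^k := by
    calc 1 = 1*1 := by ring
      _ ≤ k*3^k := Nat.mul_le_mul hk e1
  have hexp : 3*k*(3^k-1) + (3*k-1) = 2*k*3^k + (k*3^k - 1) := by
    zify [e1, e2, e3]
    ring
  have h1 : (n^(2*k) * m)^(3^k) ≤ n^(3*k*(3^k - 1)) * MM f k := by
    rw [← h0]; exact hchain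
  have h2 : n^(3*k*(3^k - 1)) * MM f k ≤ n^(3*k*(3^k-1)) * (3*k*n^(3*k-1)) :=
    mul_le_mul_of_nonneg_left htop (by positivity)
  have h3 : (n^(2*k) * m)^(3^k) = n^(2*k*3^k) * m^(3^k) := by
    rw [mul_pow, ← pow_mul]
  have h4 : n^(3*k*(3^k-1)) * (3*k*n^(3*k-1)) = n^(2*k*3^k) * (3*k*n^(k*3^k-1)) := by
    calc n^(3*k*(3^k-1)) * (3*k*n^(3*k-1))
        = 3*k*n^(3*k*(3^k-1) + (3*k-1)) := by rw [pow_add]; ring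
      _ = 3*k*(n^(2*k*3^k) * n^(k*3^k-1)) := by rw [hexp, pow_add]
      _ = n^(2*k*3^k) * (3*k*n^(k*3^k-1)) := by ring
  have key : n^(2*k*3^k) * m^(3^k) ≤ n^(2*k*3^k) * (3*k*n^(k*3^k-1)) := by
    rw [← h3, ← h4]
    exact h1.trans h2
  have hpos : (0:ℝ) < n^(2*k*3^k) := by positivity
  exact le_of_mul_le_mul_left key hpos

lemma clique_le_sum {V : Type*} [Fintype V] [Nonempty V] (G : SimpleGraph V) (k : ℕ) :
    ({S : Finset V | G.IsNClique k S}.ncard : ℝ)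
      ≤ ∑ y : Fin k → V,
          indR (Function.Injective y ∧ ∀ a b : Fin k, a ≠ b → G.Adj (y a) (y b)) := by
  classical
  rw [indR_sum (fun y : Fin k → V =>
    Function.Injective y ∧ ∀ a b : Fin k, a ≠ b → G.Adj (y a) (y b))]
  have h1 : {S : Finset V | G.IsNClique k S}.ncard
      = (Finset.univ.filter (fun S : Finset V => G.IsNClique k S)).card := by
    rw [← Set.toFinset_setOf, Set.ncard_eq_toFinset_card']
  rw [h1]
  have hmain : (Finset.univ.filter (fun S : Finset V => G.IsNClique k S)).card
      ≤ (Finset.univ.filter (fun y : Fin k → V =>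
          Function.Injective y ∧ ∀ a b : Fin k, a ≠ b → G.Adj (y a) (y b))).card := by
    set φ : Finset V → (Fin k → V) := fun S =>
      if h : S.card = k then (fun i => ((S.equivFinOfCardEq h).symm i : V))
      else fun _ => Classical.arbitrary V with hφ
    have hφinj : ∀ (S : Finset V) (h : S.card = k), Function.Injective (φ S) := by
      intro S h
      rw [hφ]
      simp only [dif_pos h]
      intro a b hab
      exact (S.equivFinOfCardEq h).symm.injective (Subtype.coe_injective hab)
    have hφmem : ∀ (S : Finset V) (h : S.card = k) (i : Fin k), φ S i ∈ S := by
      intro S h i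
      rw [hφ]
      simp only [dif_pos h]
      exact ((S.equivFinOfCardEq h).symm i).2
    have hφimg : ∀ (S : Finset V) (h : S.card = k), Finset.univ.image (φ S) = S := by
      intro S h
      apply Finset.eq_of_subset_of_card_le
      · intro v hv
        obtain ⟨i, _, rfl⟩ := Finset.mem_image.mp hv
        exact hφmem S h i
      · rw [Finset.card_image_of_injective _ (hφinj S h), Finset.card_univ,
          Fintype.card_fin, h]
    apply Finset.card_le_card_of_injOn φ
    · intro S hS
      simp only [Finset.mem_coe, Finset.mem_filter, Finset.mem_univ, true_and] at hS ⊢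
      have hc : S.card = k := hS.card_eq
      refine ⟨hφinj S hc, ?_⟩
      intro a b hab
      have hne : φ S a ≠ φ S b := fun h => hab (hφinj S hc h)
      exact hS.isClique (hφmem S hc a) (hφmem S hc b) hne
    · intro S hS S' hS' heq
      simp only [Finset.coe_filter, Set.mem_setOf_eq, Finset.mem_univ, true_and] at hS hS'
      rw [← hφimg S hS.card_eq, ← hφimg S' hS'.card_eq, heq]
  exact_mod_cast hmain


/-- `cliqueCount G r` is the number of `r`-element vertex subsets of `G`
inducing a complete subgraph (`r`-cliques). -/
noncomputable def cliqueCount {V : Type} (G : SimpleGraph V) (r : ℕ) : ℕ :=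
  Set.ncard {S : Finset V | G.IsNClique r S}

/-- For every `d ≥ 2` there exist `ε > 0` and `n₀` such that every distance graph
in `ℝ^d` on `n ≥ n₀` vertices (a graph whose vertices are points of `ℝ^d` and whose
edges join only pairs of points at Euclidean distance exactly 1) has at most
`n ^ (⌊d/2⌋ + 1 - ε)` cliques of size `⌊d/2⌋ + 1`. -/
theorem clique_count_distance_graph (d : ℕ) (hd : 2 ≤ d) :
    ∃ ε : ℝ, 0 < ε ∧ ∃ n₀ : ℕ,
      ∀ (P : Finset (EuclideanSpace ℝ (Fin d))) (G : SimpleGraph (P : Set (EuclideanSpace ℝ (Fin d)))),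
        (∀ u v : (P : Set (EuclideanSpace ℝ (Fin d))), G.Adj u v →
          dist (u : EuclideanSpace ℝ (Fin d)) (v : EuclideanSpace ℝ (Fin d)) = 1) →
        n₀ ≤ P.card →
        (cliqueCount G (d / 2 + 1) : ℝ) ≤ (P.card : ℝ) ^ (((d / 2 + 1 : ℕ) : ℝ) - ε) := by
  classical
  refine ⟨1/(2*(3:ℝ)^(d/2+1)), by positivity, 9*(d/2+1)^2, ?_⟩
  intro P G hG hP
  set k : ℕ := d/2 + 1 with hkdef
  have hk1 : 1 ≤ k := by omega
  set ε : ℝ := 1/(2*(3:ℝ)^k) with hεdef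
  have hcardV : Fintype.card ((P : Set (EuclideanSpace ℝ (Fin d))) : Type) = P.card := by
    simp
  have hPpos : 0 < P.card := by nlinarith [hP, hk1]
  have hVpos : 0 < Fintype.card ((P : Set (EuclideanSpace ℝ (Fin d))) : Type) := by
    rw [hcardV]; exact hPpos
  have : Nonempty ((P : Set (EuclideanSpace ℝ (Fin d))) : Type) :=
    Fintype.card_pos_iff.mp hVpos
  -- the indicator function
  set f : (Fin k → ((P : Set (EuclideanSpace ℝ (Fin d))) : Type)) → ℝ :=
    fun y => indR (Function.Injective y ∧ ∀ a b : Fin k, a ≠ b → G.Adj (y a) (y b)) with hfdef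
  have hf0 : ∀ y, 0 ≤ f y := fun y => indR_nonneg _
  have hf1 : ∀ y, f y ≤ 1 := fun y => indR_le_one _
  have hzero : ∀ x : Fin k → Fin 3 → ((P : Set (EuclideanSpace ℝ (Fin d))) : Type),
      (∀ i, Function.Injective (x i)) →
      ∃ s : Fin k → Fin 3, f (fun i => x i (s i)) = 0 := by
    intro x hxinj
    by_contra hcon
    push_neg at hcon
    have hpred : ∀ s : Fin k → Fin 3,
        Function.Injective (fun i => x i (s i)) ∧
          ∀ a b : Fin k, a ≠ b → G.Adj (x a (s a)) (x b (s b)) := by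
      intro s
      by_contra hp
      exact hcon s (indR_neg hp)
    apply geom_main hd (fun i a => (x i a : EuclideanSpace ℝ (Fin d)))
    · intro i a b hab
      exact hxinj i (Subtype.coe_injective hab)
    · intro i j hij a b
      set s : Fin k → Fin 3 := fun l => if l = i then a else if l = j then b else 0 with hsdef
      have hadj := (hpred s).2 i j hij
      have hsi : s i = a := by rw [hsdef]; simp
      have hsj : s j = b := by rw [hsdef]; simp [hij.symm, if_neg]
      rw [hsi, hsj] at hadj
      exact hG _ _ hadj
  have hsum := clique_le_sum G k
  have hcm := count_main hk1 hVpos f hf0 hf1 hzero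
  set n : ℝ := (P.card : ℝ) with hndef
  have hn1 : (1:ℝ) ≤ n := by
    rw [hndef]; exact_mod_cast hPpos
  have hn0 : (0:ℝ) < n := lt_of_lt_of_le one_pos hn1
  have hN0 : (0:ℝ) ≤ (cliqueCount G k : ℝ) := Nat.cast_nonneg _
  have hNsum : (cliqueCount G k : ℝ) ≤ ∑ y, f y := by
    unfold cliqueCount
    exact hsum
  have hA : ((cliqueCount G k : ℝ))^(3^k) ≤ 3*(k:ℝ)*n^(k*3^k - 1) := by
    calc ((cliqueCount G k : ℝ))^(3^k) ≤ (∑ y, f y)^(3^k) :=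
          pow_le_pow_left₀ hN0 hNsum _
      _ ≤ 3*(k:ℝ)*((Fintype.card ((P : Set (EuclideanSpace ℝ (Fin d))) : Type) : ℝ))^(k*3^k - 1) := hcm
      _ = 3*(k:ℝ)*n^(k*3^k - 1) := by rw [hcardV]
  -- now the rpow arithmetic
  have e1 : 1 ≤ 3^k := Nat.one_le_pow _ _ (by norm_num)
  have e3 : 1 ≤ k*3^k := by
    calc 1 = 1*1 := by ring
      _ ≤ k*3^k := Nat.mul_le_mul hk1 e1
  have h3k : 3*(k:ℝ) ≤ n ^ ((1:ℝ)/2) := by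
    have h9 : ((9*k^2 : ℕ):ℝ) ≤ n := by
      rw [hndef]; exact_mod_cast hP
    have hNat : (3*k)^2 ≤ P.card := by
      calc (3*k)^2 = 9*k^2 := by ring
        _ ≤ P.card := hP
    have hsq : (3*(k:ℝ))^2 ≤ n := by
      rw [hndef]; exact_mod_cast hNat
    have h2 := Real.rpow_le_rpow (by positivity) hsq (by norm_num : (0:ℝ) ≤ 1/2)
    have h3 : ((3*(k:ℝ))^2) ^ ((1:ℝ)/2) = 3*(k:ℝ) := by
      rw [← Real.rpow_natCast (3*(k:ℝ)) 2, ← Real.rpow_mul (by positivity)]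
      norm_num
    rwa [h3] at h2
  have hcast : (((k*3^k - 1 : ℕ)):ℝ) = (k:ℝ)*(3:ℝ)^k - 1 := by
    rw [Nat.cast_sub e3]
    push_cast
    ring
  have hεK : ((k:ℝ) - ε) * ((3^k : ℕ) : ℝ) = (k:ℝ)*(3:ℝ)^k - 1/2 := by
    rw [hεdef]
    push_cast
    have h3pos : (0:ℝ) < (3:ℝ)^k := by positivity
    field_simp
  have hfinal : ((cliqueCount G k : ℝ))^(3^k) ≤ (n ^ ((k:ℝ) - ε))^(3^k) := by
    have hr1 : (n ^ ((k:ℝ) - ε))^(3^k) = n ^ (((k:ℝ) - ε) * ((3^k : ℕ) : ℝ)) := by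
      rw [← Real.rpow_natCast (n ^ ((k:ℝ) - ε)) (3^k), ← Real.rpow_mul (le_of_lt hn0)]
    rw [hr1, hεK]
    calc ((cliqueCount G k : ℝ))^(3^k) ≤ 3*(k:ℝ)*n^(k*3^k - 1) := hA
      _ = 3*(k:ℝ) * n ^ ((k:ℝ)*(3:ℝ)^k - 1) := by
          rw [← Real.rpow_natCast n (k*3^k - 1), hcast]
      _ ≤ n ^ ((1:ℝ)/2) * n ^ ((k:ℝ)*(3:ℝ)^k - 1) := by
          apply mul_le_mul_of_nonneg_right h3k (Real.rpow_nonneg (le_of_lt hn0) _)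
      _ = n ^ ((k:ℝ)*(3:ℝ)^k - 1/2) := by
          rw [← Real.rpow_add hn0]
          congr 1
          ring
  have hgoal : (cliqueCount G k : ℝ) ≤ n ^ ((k:ℝ) - ε) := by
    apply le_of_pow_le_pow_left₀ (n := 3^k) (by positivity)
      (Real.rpow_nonneg (le_of_lt hn0) _) hfinal
  exact hgoal
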